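/- For k ≥ 1 and n ≥ r(k+r), the k-tuple total domination number of the Kneser graph K(n,r) equals k+r, and conversely, if γ_{×k,t}(K(n,r)) = k+r (with n ≥ 2r), then n ≥ r(k+r). Moreover, for n ≥ r(k+r), every minimum k-tuple total dominating set of K(n,r) is a clique. -/

import Mathlib

open Finset

/-- The vertex set of the Kneser graph `K(n,r)`: the `r`-element subsets of `[n] = {1,…,n}`. -/
def KneserVerts (n r : ℕ) : Finset (Finset ℕ) := (Finset.Icc 1 n).powersetCard r

/-- Adjacency in a Kneser graph: distinct disjoint sets. -/
def KneserAdj (u v : Finset ℕ) : Prop := u ≠ v ∧ Disjoint u v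

instance (u v : Finset ℕ) : Decidable (KneserAdj u v) := by
  unfold KneserAdj; infer_instance

/-- `D` is a `k`-dominating set of `K(n,r)`: every vertex outside `D` has at least
`k` neighbours in `D`. -/
def IsKDomSet (n r k : ℕ) (D : Finset (Finset ℕ)) : Prop :=
  D ⊆ KneserVerts n r ∧
    ∀ v ∈ KneserVerts n r, v ∉ D → k ≤ (D.filter fun u => KneserAdj v u).card

/-- `D` is a `k`-tuple dominating set of `K(n,r)`: every vertex has at least `k`
vertices of `D` in its closed neighbourhood. -/
def IsKTupleDomSet (n r k : ℕ) (D : Finset (Finset ℕ)) : Prop :=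
  D ⊆ KneserVerts n r ∧
    ∀ v ∈ KneserVerts n r, k ≤ (D.filter fun u => u = v ∨ KneserAdj v u).card

/-- `D` is a `k`-tuple total dominating set of `K(n,r)`: every vertex has at least
`k` neighbours in `D`. -/
def IsKTupleTotalDomSet (n r k : ℕ) (D : Finset (Finset ℕ)) : Prop :=
  D ⊆ KneserVerts n r ∧
    ∀ v ∈ KneserVerts n r, k ≤ (D.filter fun u => KneserAdj v u).card

/-- The `k`-domination number `γ_k(K(n,r))`. -/
noncomputable def kdomNum (n r k : ℕ) : ℕ :=
  sInf {m | ∃ D, IsKDomSet n r k D ∧ D.card = m}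

/-- The `k`-tuple domination number `γ_{×k}(K(n,r))`. -/
noncomputable def ktupleDomNum (n r k : ℕ) : ℕ :=
  sInf {m | ∃ D, IsKTupleDomSet n r k D ∧ D.card = m}

/-- The `k`-tuple total domination number `γ_{×k,t}(K(n,r))`. -/
noncomputable def ktupleTotalDomNum (n r k : ℕ) : ℕ :=
  sInf {m | ∃ D, IsKTupleTotalDomSet n r k D ∧ D.card = m}

/-- `S` is a 2-packing of `K(n,r)`: any two distinct members are neither adjacent
nor have a common neighbour (i.e. are at distance at least 3). -/
def IsTwoPacking (n r : ℕ) (S : Finset (Finset ℕ)) : Prop :=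
  S ⊆ KneserVerts n r ∧
    ∀ u ∈ S, ∀ v ∈ S, u ≠ v →
      ¬ KneserAdj u v ∧ ∀ w ∈ KneserVerts n r, ¬ (KneserAdj u w ∧ KneserAdj w v)

/-- The 2-packing number `ρ₂(K(n,r))`. -/
noncomputable def twoPackingNum (n r : ℕ) : ℕ :=
  sSup {m | ∃ S, IsTwoPacking n r S ∧ S.card = m}

/-- A clique in a Kneser graph: a family of pairwise disjoint sets. -/
def IsKneserClique (D : Finset (Finset ℕ)) : Prop :=
  ∀ u ∈ D, ∀ v ∈ D, u ≠ v → Disjoint u v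

lemma mem_KneserVerts {n r : ℕ} {v : Finset ℕ} :
    v ∈ KneserVerts n r ↔ v ⊆ Finset.Icc 1 n ∧ v.card = r := Finset.mem_powersetCard

lemma kdisj {n r k : ℕ} {D : Finset (Finset ℕ)} (hD : IsKTupleTotalDomSet n r k D)
    (hrn : r ≤ n) {T : Finset ℕ} (hT : T ⊆ Finset.Icc 1 n) (hTc : T.card ≤ r) :
    k ≤ (D.filter fun u => Disjoint u T).card := by
  obtain ⟨v, hTv, hvI, hvc⟩ := Finset.exists_subsuperset_card_eq hT hTc
    (by rw [Nat.card_Icc]; omega)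
  have hv : v ∈ KneserVerts n r := mem_KneserVerts.2 ⟨hvI, hvc⟩
  refine (hD.2 v hv).trans (Finset.card_le_card ?_)
  intro u hu
  rw [Finset.mem_filter] at hu ⊢
  exact ⟨hu.1, (hu.2.2.symm).mono_right hTv⟩

lemma grow {n r k : ℕ} {D : Finset (Finset ℕ)} (hD : IsKTupleTotalDomSet n r k D)
    (hrn : r ≤ n) (hk : 1 ≤ k) :
    ∀ (m : ℕ) (T : Finset ℕ), T ⊆ Finset.Icc 1 n → T.card + m = r →
    ∃ T', T' ⊆ Finset.Icc 1 n ∧ T'.card = r ∧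
      (D.filter fun u => ¬ Disjoint u T).card + m ≤ (D.filter fun u => ¬ Disjoint u T').card := by
  intro m
  induction m with
  | zero =>
    intro T hT hTc
    exact ⟨T, hT, by omega, by omega⟩
  | succ m ih =>
    intro T hT hTc
    have hTr : T.card ≤ r := by omega
    have hkd := kdisj hD hrn hT hTr
    have hne : (D.filter fun u => Disjoint u T).Nonempty := by
      rw [← Finset.card_pos]; omega
    obtain ⟨u, hu⟩ := hne
    rw [Finset.mem_filter] at hu
    have huV := mem_KneserVerts.1 (hD.1 hu.1)
    have hune : u.Nonempty := by rw [← Finset.card_pos, huV.2]; omega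
    obtain ⟨x, hx⟩ := hune
    have hxT : x ∉ T := Finset.disjoint_left.1 hu.2 hx
    have hT2 : insert x T ⊆ Finset.Icc 1 n :=
      Finset.insert_subset (huV.1 hx) hT
    have hT2c : (insert x T).card + m = r := by
      rw [Finset.card_insert_of_notMem hxT]; omega
    obtain ⟨T', hT'I, hT'c, hle⟩ := ih (insert x T) hT2 hT2c
    refine ⟨T', hT'I, hT'c, ?_⟩
    have hsub : insert u (D.filter fun w => ¬ Disjoint w T) ⊆
        D.filter fun w => ¬ Disjoint w (insert x T) := by
      intro w hw
      rw [Finset.mem_insert] at hw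
      rw [Finset.mem_filter]
      rcases hw with rfl | hw
      · exact ⟨hu.1, fun hd => (Finset.disjoint_right.1 hd (Finset.mem_insert_self x T)) hx⟩
      · rw [Finset.mem_filter] at hw
        exact ⟨hw.1, fun hd => hw.2 (hd.mono_right (Finset.subset_insert x T))⟩
    have huni : u ∉ (D.filter fun w => ¬ Disjoint w T) := by
      rw [Finset.mem_filter]
      push_neg
      intro _
      exact hu.2
    have hcard := Finset.card_le_card hsub
    rw [Finset.card_insert_of_notMem huni] at hcard
    omega

lemma main_bound {n r k : ℕ} {D : Finset (Finset ℕ)} (hD : IsKTupleTotalDomSet n r k D)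
    (hrn : r ≤ n) (hk : 1 ≤ k) (T : Finset ℕ) (hT : T ⊆ Finset.Icc 1 n)
    (m : ℕ) (hTc : T.card + m = r) :
    (D.filter fun u => ¬ Disjoint u T).card + m + k ≤ D.card := by
  obtain ⟨T', hT'I, hT'c, hle⟩ := grow hD hrn hk m T hT hTc
  have hk' : k ≤ (D.filter fun u => Disjoint u T').card :=
    kdisj hD hrn hT'I (le_of_eq hT'c)
  have hsplit := Finset.card_filter_add_card_filter_not
    (s := D) (p := fun u => Disjoint u T')
  omega

lemma lower_bound {n r k : ℕ} {D : Finset (Finset ℕ)} (hD : IsKTupleTotalDomSet n r k D)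
    (hrn : r ≤ n) (hk : 1 ≤ k) : k + r ≤ D.card := by
  have h := main_bound hD hrn hk ∅ (Finset.empty_subset _) r (by simp)
  simpa using h.trans_eq rfl |>.trans (le_refl _) |>.trans (le_refl _) |> fun h' => by omega
open Finset

lemma min_is_clique {n r k : ℕ} {D : Finset (Finset ℕ)} (hD : IsKTupleTotalDomSet n r k D)
    (hr : 1 ≤ r) (hrn : r ≤ n) (hk : 1 ≤ k) (hcard : D.card = k + r) :
    IsKneserClique D := by
  intro u hu w hw huw
  by_contra hnd
  obtain ⟨x, hxu, hxw⟩ := Finset.not_disjoint_iff.1 hnd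
  have hxI : ({x} : Finset ℕ) ⊆ Finset.Icc 1 n := by
    simp only [Finset.singleton_subset_iff]
    exact (mem_KneserVerts.1 (hD.1 hu)).1 hxu
  have hb := main_bound hD hrn hk {x} hxI (r - 1) (by simp; omega)
  have h2 : 2 ≤ (D.filter fun z => ¬ Disjoint z ({x} : Finset ℕ)).card := by
    have hsub : ({u, w} : Finset (Finset ℕ)) ⊆
        D.filter fun z => ¬ Disjoint z ({x} : Finset ℕ) := by
      intro z hz
      rw [Finset.mem_insert, Finset.mem_singleton] at hz
      rw [Finset.mem_filter, Finset.disjoint_singleton_right]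
      rcases hz with rfl | rfl
      · exact ⟨hu, by simpa using hxu⟩
      · exact ⟨hw, by simpa using hxw⟩
    have := Finset.card_le_card hsub
    rwa [Finset.card_insert_of_notMem (by simpa using huw), Finset.card_singleton] at this
  omega

lemma construction {n r k : ℕ} (hr : 1 ≤ r) (hk : 1 ≤ k) (hn : r * (k + r) ≤ n) :
    ∃ D, IsKTupleTotalDomSet n r k D ∧ D.card = k + r := by
  set f : ℕ → Finset ℕ := fun i => Finset.Icc (i * r + 1) (i * r + r) with hf
  have hfc : ∀ i, (f i).card = r := by intro i; rw [hf]; simp [Nat.card_Icc]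
  have hfI : ∀ i < k + r, f i ⊆ Finset.Icc 1 n := by
    intro i hi x hx
    rw [hf] at hx
    simp only [Finset.mem_Icc] at hx ⊢
    have h1 : (i + 1) * r ≤ (k + r) * r := Nat.mul_le_mul_right r (by omega)
    have h2 : (k + r) * r = r * (k + r) := Nat.mul_comm _ _
    have h3 : (i + 1) * r = i * r + r := by ring
    omega
  have hfd : ∀ i j, i ≠ j → Disjoint (f i) (f j) := by
    intro i j hij
    rw [Finset.disjoint_left]
    intro x hxi hxj
    rw [hf] at hxi hxj
    simp only [Finset.mem_Icc] at hxi hxj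
    rcases Nat.lt_or_ge i j with h | h
    · have : (i + 1) * r ≤ j * r := Nat.mul_le_mul_right r (by omega)
      have h3 : (i + 1) * r = i * r + r := by ring
      omega
    · have hji : j < i := by omega
      have : (j + 1) * r ≤ i * r := Nat.mul_le_mul_right r (by omega)
      have h3 : (j + 1) * r = j * r + r := by ring
      omega
  have hinj : Set.InjOn f ↑(Finset.range (k + r)) := by
    intro i _ j _ hij
    by_contra hne
    have := hfd i j hne
    rw [Finset.disjoint_left] at this
    have hmem : i * r + 1 ∈ f i := by rw [hf]; simp; omega
    exact this hmem (hij ▸ hmem)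
  refine ⟨(Finset.range (k + r)).image f, ⟨?_, ?_⟩, ?_⟩
  · intro u hu
    rw [Finset.mem_image] at hu
    obtain ⟨i, hi, rfl⟩ := hu
    rw [Finset.mem_range] at hi
    exact mem_KneserVerts.2 ⟨hfI i hi, hfc i⟩
  · intro v hv
    set D := (Finset.range (k + r)).image f with hDdef
    have hvV := mem_KneserVerts.1 hv
    -- members of D meeting v number at most r
    have hMle : (D.filter fun u => ¬ Disjoint v u).card ≤ r := by
      rw [← hvV.2]
      apply Finset.card_le_card_of_injOn
        (fun u => if h : (v ∩ u).Nonempty then (v ∩ u).min' h else 0)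
      · intro u hu
        rw [Finset.mem_coe, Finset.mem_filter] at hu
        have hne : (v ∩ u).Nonempty := by
          rw [Finset.not_disjoint_iff] at hu
          obtain ⟨y, hy1, hy2⟩ := hu.2
          exact ⟨y, Finset.mem_inter.2 ⟨hy1, hy2⟩⟩
        dsimp only
        rw [dif_pos hne]
        exact Finset.mem_of_mem_inter_left ((v ∩ _).min'_mem hne)
      · intro u1 hu1 u2 hu2 heq
        simp only [Finset.coe_filter, Set.mem_setOf_eq] at hu1 hu2
        have hne1 : (v ∩ u1).Nonempty := by
          rw [Finset.not_disjoint_iff] at hu1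
          obtain ⟨y, hy1, hy2⟩ := hu1.2
          exact ⟨y, Finset.mem_inter.2 ⟨hy1, hy2⟩⟩
        have hne2 : (v ∩ u2).Nonempty := by
          rw [Finset.not_disjoint_iff] at hu2
          obtain ⟨y, hy1, hy2⟩ := hu2.2
          exact ⟨y, Finset.mem_inter.2 ⟨hy1, hy2⟩⟩
        dsimp only at heq
        rw [dif_pos hne1, dif_pos hne2] at heq
        have hy1 := (v ∩ u1).min'_mem hne1
        have hy2 := (v ∩ u2).min'_mem hne2
        rw [heq] at hy1
        -- common element of u1 and u2
        obtain ⟨i1, hi1, rfl⟩ := Finset.mem_image.1 hu1.1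
        obtain ⟨i2, hi2, rfl⟩ := Finset.mem_image.1 hu2.1
        by_contra hne
        have hij : i1 ≠ i2 := fun h => hne (by rw [h])
        exact Finset.disjoint_left.1 (hfd i1 i2 hij)
          (Finset.mem_of_mem_inter_right hy1)
          (Finset.mem_of_mem_inter_right hy2)
    have hsplit := Finset.card_filter_add_card_filter_not
      (s := D) (p := fun u => Disjoint v u)
    have hDc : D.card = k + r :=
      (Finset.card_image_of_injOn hinj).trans (Finset.card_range _)
    have hsub : (D.filter fun u => Disjoint v u) ⊆ D.filter fun u => KneserAdj v u := by
      intro u hu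
      rw [Finset.mem_filter] at hu ⊢
      refine ⟨hu.1, ?_, hu.2⟩
      intro hvu
      obtain ⟨i, hi, rfl⟩ := Finset.mem_image.1 hu.1
      have hne : (f i).Nonempty := by rw [← Finset.card_pos, hfc i]; omega
      obtain ⟨y, hy⟩ := hne
      exact Finset.disjoint_left.1 (hvu ▸ hu.2) hy hy
    have := Finset.card_le_card hsub
    omega
  · exact (Finset.card_image_of_injOn hinj).trans (Finset.card_range _)

lemma clique_bound {n r k : ℕ} {D : Finset (Finset ℕ)} (hsub : D ⊆ KneserVerts n r)
    (hcl : IsKneserClique D) (hcard : D.card = k + r) : r * (k + r) ≤ n := by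
  have h1 : D.biUnion id ⊆ Finset.Icc 1 n := by
    intro x hx
    obtain ⟨u, hu, hxu⟩ := Finset.mem_biUnion.1 hx
    exact (mem_KneserVerts.1 (hsub hu)).1 hxu
  have h2 : (D.biUnion id).card = ∑ u ∈ D, u.card := Finset.card_biUnion hcl
  have h3 : ∑ u ∈ D, u.card = (k + r) * r := by
    rw [Finset.sum_congr rfl (fun u hu => (mem_KneserVerts.1 (hsub hu)).2),
      Finset.sum_const, smul_eq_mul, hcard]
  have h4 := Finset.card_le_card h1
  rw [h2, h3, Nat.card_Icc] at h4
  calc r * (k + r) = (k + r) * r := Nat.mul_comm _ _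
    _ ≤ n := by omega

lemma gamma_eq {n r k : ℕ} (hr : 1 ≤ r) (hk : 1 ≤ k) (hrn : r ≤ n) (hn : r * (k + r) ≤ n) :
    ktupleTotalDomNum n r k = k + r := by
  obtain ⟨D, hD, hDc⟩ := construction hr hk hn
  refine le_antisymm (Nat.sInf_le ⟨D, hD, hDc⟩) ?_
  refine le_csInf ⟨k + r, D, hD, hDc⟩ ?_
  rintro m ⟨E, hE, rfl⟩
  exact lower_bound hE hrn hk


theorem stmt_3 (n r k : ℕ) (hr : 1 ≤ r) (hk : 1 ≤ k) (hn : 2 * r ≤ n) :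
    (ktupleTotalDomNum n r k = k + r ↔ r * (k + r) ≤ n) ∧
    (r * (k + r) ≤ n → ∀ D : Finset (Finset ℕ), IsKTupleTotalDomSet n r k D →
      D.card = ktupleTotalDomNum n r k → IsKneserClique D) := by
  have hrn : r ≤ n := by omega
  constructor
  · constructor
    · intro h
      have hne : {m | ∃ D, IsKTupleTotalDomSet n r k D ∧ D.card = m}.Nonempty := by
        by_contra hcon
        rw [Set.not_nonempty_iff_eq_empty] at hcon
        rw [ktupleTotalDomNum, hcon, Nat.sInf_empty] at h
        omega
      obtain ⟨D, hD, hDc⟩ := Nat.sInf_mem hne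
      rw [show sInf {m | ∃ D, IsKTupleTotalDomSet n r k D ∧ D.card = m} =
        ktupleTotalDomNum n r k from rfl, h] at hDc
      exact clique_bound hD.1 (min_is_clique hD hr hrn hk hDc) hDc
    · exact fun h => gamma_eq hr hk hrn h
  · intro h D hD hcard
    rw [gamma_eq hr hk hrn h] at hcard
    exact min_is_clique hD hr hrn hk hcard
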